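/- arXiv:2604.03544 — 2 statements merged into one kernel-verified Lean document; each statement's English description precedes it below -/
import Mathlib

section
/- For the LATE weight, E[α(W)|W_s] = α_s(W_s): if Z is a {0,1}-valued random variable, π(X,A) = P(Z=1|X,A) ∈ (0,1) a.s. and π_s(X) = P(Z=1|X) ∈ (0,1) a.s., then E[Z/π(X,A) - (1-Z)/(1-π(X,A)) | Z, X] = Z/π_s(X) - (1-Z)/(1-π_s(X)) a.s. -/
open MeasureTheory Filter Set Topology
open scoped Classical

namespace Late13

section clean
variable {α : Type*} [MeasurableSpace α] {μ : Measure α}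

lemma ind_int [IsFiniteMeasure μ] {C : Set α} (hC : MeasurableSet C) :
    ∫ ω, C.indicator (fun _ => (1:ℝ)) ω ∂μ = (μ C).toReal := by
  rw [integral_indicator_const (1:ℝ) hC]; simp [Measure.real]

lemma int_ind {B : Set α} (hB : MeasurableSet B) (f : α → ℝ) :
    ∫ x in B, f x ∂μ = ∫ x, B.indicator f x ∂μ := (integral_indicator hB).symm

lemma int_compl {B : Set α} (hB : MeasurableSet B) {f : α → ℝ} (hf : Integrable f μ) :
    ∫ x in Bᶜ, f x ∂μ = ∫ x, f x ∂μ - ∫ x in B, f x ∂μ := by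
  have := integral_add_compl hB hf
  linarith

lemma int_iUnion {s : ℕ → Set α} (hm : ∀ i, MeasurableSet (s i))
    (hd : Pairwise (Function.onFun Disjoint s)) {f : α → ℝ} (hf : Integrable f μ) :
    ∫ x in ⋃ i, s i, f x ∂μ = ∑' i, ∫ x in s i, f x ∂μ :=
  integral_iUnion hm hd hf.integrableOn

end clean


variable {Ω : Type*} {m0 : MeasurableSpace Ω} {μ : Measure Ω}

/-- Workhorse: for a {0,1}-valued `W` with `p = E[W|m]` positive a.e., and a bounded
nonneg `m`-measurable `h`, the function `W·h/p` is integrable with integral `∫ h`. -/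
lemma key {m : MeasurableSpace Ω} (hm : m ≤ m0) [IsProbabilityMeasure μ]
    {W : Ω → ℝ} (hWmeas : Measurable[m0] W) (hW01 : ∀ᵐ ω ∂μ, W ω = 0 ∨ W ω = 1)
    (hp : ∀ᵐ ω ∂μ, 0 < (μ[W|m]) ω)
    {h : Ω → ℝ} (hhm : StronglyMeasurable[m] h) (hh0 : ∀ ω, 0 ≤ h ω) (hh1 : ∀ ω, h ω ≤ 1) :
    Integrable (fun ω => W ω * h ω / (μ[W|m]) ω) μ ∧
      ∫ ω, W ω * h ω / (μ[W|m]) ω ∂μ = ∫ ω, h ω ∂μ := by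
  have hWint : Integrable W μ := by
    refine (integrable_const (1:ℝ)).mono' hWmeas.aestronglyMeasurable ?_
    filter_upwards [hW01] with ω hω
    rcases hω with h'|h' <;> simp [h']
  set p : Ω → ℝ := μ[W|m] with hpdef
  have hpm : StronglyMeasurable[m] p := stronglyMeasurable_condExp
  have hpmm : Measurable[m] p := hpm.measurable
  have hpmeas : Measurable[m0] p := hpmm.mono hm le_rfl
  have hW0 : 0 ≤ᵐ[μ] W := by
    filter_upwards [hW01] with ω hω; rcases hω with h'|h' <;> simp [h']
  set q : ℕ → Ω → ℝ := fun n ω => h ω * max (min (1 / p ω) n) 0 with hqdef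
  have hqmm : ∀ n, Measurable[m] (q n) := fun n =>
    hhm.measurable.mul (((measurable_const.div hpmm).min measurable_const).max measurable_const)
  have hq0 : ∀ n ω, 0 ≤ q n ω := fun n ω => mul_nonneg (hh0 ω) (le_max_right _ _)
  have hqle : ∀ n ω, q n ω ≤ n := by
    intro n ω
    calc q n ω ≤ 1 * max (min (1 / p ω) n) 0 :=
          mul_le_mul_of_nonneg_right (hh1 ω) (le_max_right _ _)
    _ = max (min (1 / p ω) n) 0 := one_mul _
    _ ≤ n := max_le (min_le_right _ _) (Nat.cast_nonneg n)
  have hqWint : ∀ n, Integrable (fun ω => q n ω * W ω) μ := by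
    intro n
    refine (integrable_const ((n:ℝ))).mono'
      (((hqmm n).mono hm le_rfl).mul hWmeas).aestronglyMeasurable ?_
    filter_upwards [hW01] with ω hω
    rcases hω with h'|h'
    · simp [h']
    · rw [h', mul_one, Real.norm_eq_abs, abs_of_nonneg (hq0 n ω)]; exact hqle n ω
  have hstep1 : ∀ n, ∫ ω, q n ω * W ω ∂μ = ∫ ω, q n ω * p ω ∂μ := by
    intro n
    have hmul : μ[q n * W|m] =ᵐ[μ] q n * μ[W|m] :=
      condExp_mul_of_stronglyMeasurable_left ((hqmm n).stronglyMeasurable) (hqWint n) hWint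
    have h1 : ∫ ω, (μ[q n * W|m]) ω ∂μ = ∫ ω, (q n * W) ω ∂μ := integral_condExp hm
    calc ∫ ω, q n ω * W ω ∂μ = ∫ ω, (μ[q n * W|m]) ω ∂μ := h1.symm
    _ = ∫ ω, q n ω * p ω ∂μ := integral_congr_ae hmul
  have hbound2 : ∀ n, ∀ᵐ ω ∂μ, ‖q n ω * p ω‖ ≤ 1 := by
    intro n
    filter_upwards [hp] with ω hpω
    have h1p : 0 < 1 / p ω := by positivity
    have hmin0 : 0 ≤ min (1 / p ω) n := le_min h1p.le (Nat.cast_nonneg n)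
    have hqp0 : 0 ≤ q n ω * p ω := mul_nonneg (hq0 n ω) hpω.le
    have h2 : min (1 / p ω) n * p ω ≤ 1 := by
      calc min (1 / p ω) n * p ω ≤ (1 / p ω) * p ω :=
            mul_le_mul_of_nonneg_right (min_le_left _ _) hpω.le
      _ = 1 := one_div_mul_cancel hpω.ne'
    have hqp : q n ω * p ω ≤ 1 := by
      calc q n ω * p ω = h ω * (min (1 / p ω) n * p ω) := by
            simp only [hqdef, max_eq_left hmin0]; ring
      _ ≤ 1 * 1 := mul_le_mul (hh1 ω) h2 (mul_nonneg hmin0 hpω.le) zero_le_one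
      _ = 1 := one_mul 1
    rw [Real.norm_eq_abs, abs_of_nonneg hqp0]; exact hqp
  have hqpint : ∀ n, Integrable (fun ω => q n ω * p ω) μ := by
    intro n
    exact (integrable_const (1:ℝ)).mono'
      (((hqmm n).mono hm le_rfl).mul hpmeas).aestronglyMeasurable (hbound2 n)
  have hlim2 : ∀ᵐ ω ∂μ, Tendsto (fun n : ℕ => q n ω * p ω) atTop (𝓝 (h ω)) := by
    filter_upwards [hp] with ω hpω
    have hev : ∀ᶠ n : ℕ in atTop, q n ω * p ω = h ω := by
      obtain ⟨N, hN⟩ := exists_nat_ge (1 / p ω)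
      refine eventually_atTop.2 ⟨N, fun n hn => ?_⟩
      have hmin : min (1 / p ω) (n:ℝ) = 1 / p ω := min_eq_left (hN.trans (Nat.cast_le.2 hn))
      have h1p : (0:ℝ) ≤ 1 / p ω := by positivity
      simp only [hqdef, hmin, max_eq_left h1p]
      field_simp
    exact tendsto_const_nhds.congr' (by filter_upwards [hev] with n hn; exact hn.symm)
  have htend2 : Tendsto (fun n : ℕ => ∫ ω, q n ω * p ω ∂μ) atTop (𝓝 (∫ ω, h ω ∂μ)) :=
    tendsto_integral_of_dominated_convergence (fun _ => (1:ℝ))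
      (fun n => (((hqmm n).mono hm le_rfl).mul hpmeas).aestronglyMeasurable)
      (integrable_const 1) hbound2 hlim2
  have hhmeas : Measurable[m0] h := (hhm.mono hm).measurable
  have hGmeas : AEStronglyMeasurable[m0] (fun ω => W ω * h ω / p ω) μ :=
    ((hWmeas.mul hhmeas).div hpmeas).aestronglyMeasurable
  have hmono : ∀ᵐ ω ∂μ, Monotone fun n : ℕ => q n ω * W ω := by
    filter_upwards [hW0] with ω hω
    intro a b hab
    have hle : max (min (1 / p ω) (a:ℝ)) 0 ≤ max (min (1 / p ω) (b:ℝ)) 0 :=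
      max_le_max (min_le_min le_rfl (Nat.cast_le.2 hab)) le_rfl
    exact mul_le_mul_of_nonneg_right
      (by simp only [hqdef]; exact mul_le_mul_of_nonneg_left hle (hh0 ω)) hω
  have hlimW : ∀ᵐ ω ∂μ, ∀ᶠ n : ℕ in atTop, q n ω * W ω = W ω * h ω / p ω := by
    filter_upwards [hp] with ω hpω
    obtain ⟨N, hN⟩ := exists_nat_ge (1 / p ω)
    refine eventually_atTop.2 ⟨N, fun n hn => ?_⟩
    have hmin : min (1 / p ω) (n:ℝ) = 1 / p ω := min_eq_left (hN.trans (Nat.cast_le.2 hn))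
    have h1p : (0:ℝ) ≤ 1 / p ω := by positivity
    simp only [hqdef, hmin, max_eq_left h1p]
    field_simp
  have hFnn : ∀ n, 0 ≤ᵐ[μ] fun ω => q n ω * W ω := by
    intro n; filter_upwards [hW0] with ω hω; exact mul_nonneg (hq0 n ω) hω
  have hGnn : 0 ≤ᵐ[μ] fun ω => W ω * h ω / p ω := by
    filter_upwards [hW0, hp] with ω h1 h2
    exact div_nonneg (mul_nonneg h1 (hh0 ω)) h2.le
  have hint_val : ∀ n, ∫ ω, q n ω * W ω ∂μ ≤ 1 := by
    intro n
    rw [hstep1 n]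
    have hle : (fun ω => q n ω * p ω) ≤ᵐ[μ] fun _ => (1:ℝ) := by
      filter_upwards [hbound2 n] with ω hω
      exact (le_abs_self _).trans (by rwa [Real.norm_eq_abs] at hω)
    have := integral_mono_ae (hqpint n) (integrable_const (1:ℝ)) hle
    simpa using this
  have hGsup : ∀ᵐ ω ∂μ, ENNReal.ofReal (W ω * h ω / p ω)
      = ⨆ n : ℕ, ENNReal.ofReal (q n ω * W ω) := by
    filter_upwards [hmono, hlimW] with ω h1 h2
    have htend : Tendsto (fun n : ℕ => ENNReal.ofReal (q n ω * W ω)) atTop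
        (𝓝 (ENNReal.ofReal (W ω * h ω / p ω))) := by
      refine (ENNReal.continuous_ofReal.tendsto _).comp ?_
      exact tendsto_const_nhds.congr' (by filter_upwards [h2] with n hn; exact hn.symm)
    have hm2 : Monotone fun n : ℕ => ENNReal.ofReal (q n ω * W ω) :=
      fun a b hab => ENNReal.ofReal_le_ofReal (h1 hab)
    exact tendsto_nhds_unique htend (tendsto_atTop_iSup hm2)
  have hlin : ∫⁻ ω, ENNReal.ofReal (W ω * h ω / p ω) ∂μ ≤ 1 := by
    calc ∫⁻ ω, ENNReal.ofReal (W ω * h ω / p ω) ∂μ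
        = ∫⁻ ω, ⨆ n : ℕ, ENNReal.ofReal (q n ω * W ω) ∂μ := lintegral_congr_ae hGsup
    _ = ⨆ n : ℕ, ∫⁻ ω, ENNReal.ofReal (q n ω * W ω) ∂μ := by
        refine lintegral_iSup' (fun n => ?_) ?_
        · exact (ENNReal.measurable_ofReal.comp
            (((hqmm n).mono hm le_rfl).mul hWmeas)).aemeasurable
        · filter_upwards [hmono] with ω hω
          exact fun a b hab => ENNReal.ofReal_le_ofReal (hω hab)
    _ ≤ 1 := by
        refine iSup_le fun n => ?_
        rw [← ofReal_integral_eq_lintegral_ofReal (hqWint n) (hFnn n)]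
        exact ENNReal.ofReal_le_one.2 (hint_val n)
  have hGint : Integrable (fun ω => W ω * h ω / p ω) μ := by
    refine ⟨hGmeas, ?_⟩
    rw [hasFiniteIntegral_iff_ofReal hGnn]
    exact lt_of_le_of_lt hlin ENNReal.one_lt_top
  refine ⟨hGint, ?_⟩
  have htendG : Tendsto (fun n : ℕ => ∫ ω, q n ω * W ω ∂μ) atTop
      (𝓝 (∫ ω, W ω * h ω / p ω ∂μ)) := by
    refine tendsto_integral_of_dominated_convergence (fun ω => W ω * h ω / p ω)
      (fun n => (((hqmm n).mono hm le_rfl).mul hWmeas).aestronglyMeasurable) hGint ?_ ?_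
    · intro n
      filter_upwards [hW0, hp] with ω h1 h2
      rw [Real.norm_eq_abs, abs_of_nonneg (mul_nonneg (hq0 n ω) h1)]
      have hminle : max (min (1 / p ω) (n:ℝ)) 0 ≤ 1 / p ω :=
        max_le (min_le_left _ _) (by positivity)
      calc q n ω * W ω ≤ h ω * (1 / p ω) * W ω := by
            refine mul_le_mul_of_nonneg_right ?_ h1
            simp only [hqdef]
            exact mul_le_mul_of_nonneg_left hminle (hh0 ω)
      _ = W ω * h ω / p ω := by field_simp
    · filter_upwards [hlimW] with ω hω
      exact tendsto_const_nhds.congr' (by filter_upwards [hω] with n hn; exact hn.symm)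
  have htend2' : Tendsto (fun n : ℕ => ∫ ω, q n ω * W ω ∂μ) atTop (𝓝 (∫ ω, h ω ∂μ)) := by
    refine htend2.congr fun n => (hstep1 n).symm
  exact tendsto_nhds_unique htendG htend2'


/-- Indicator version of `key`. -/
lemma key_ind {m : MeasurableSpace Ω} (hm : m ≤ m0) [IsProbabilityMeasure μ]
    {W : Ω → ℝ} (hWmeas : Measurable[m0] W) (hW01 : ∀ᵐ ω ∂μ, W ω = 0 ∨ W ω = 1)
    (hp : ∀ᵐ ω ∂μ, 0 < (μ[W|m]) ω) {C : Set Ω} (hC : MeasurableSet[m] C) :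
    Integrable (fun ω => W ω * C.indicator (fun _ => (1:ℝ)) ω / (μ[W|m]) ω) μ ∧
      ∫ ω, W ω * C.indicator (fun _ => (1:ℝ)) ω / (μ[W|m]) ω ∂μ = (μ C).toReal := by
  have hh0 : ∀ ω, 0 ≤ C.indicator (fun _ => (1:ℝ)) ω := by
    intro ω; by_cases hω : ω ∈ C <;> simp [Set.indicator_apply, hω]
  have hh1 : ∀ ω, C.indicator (fun _ => (1:ℝ)) ω ≤ 1 := by
    intro ω; by_cases hω : ω ∈ C <;> simp [Set.indicator_apply, hω]
  have hhm : StronglyMeasurable[m] (C.indicator (fun _ => (1:ℝ))) :=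
    stronglyMeasurable_const.indicator hC
  obtain ⟨h1, h2⟩ := key hm hWmeas hW01 hp hhm hh0 hh1
  refine ⟨h1, h2.trans ?_⟩
  exact @ind_int Ω m0 μ _ _ (hm _ hC)

/-- Both pieces, with a `{0,1}`-valued `Z` whose conditional expectation is in `(0,1)`. -/
lemma pair {m : MeasurableSpace Ω} (hm : m ≤ m0) [IsProbabilityMeasure μ]
    {Z : Ω → ℝ} (hZmeas : Measurable[m0] Z) (hZint : Integrable Z μ)
    (hZ01 : ∀ᵐ ω ∂μ, Z ω = 0 ∨ Z ω = 1)
    (hπ : ∀ᵐ ω ∂μ, 0 < (μ[Z|m]) ω ∧ (μ[Z|m]) ω < 1)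
    {C : Set Ω} (hC : MeasurableSet[m] C) :
    (Integrable (fun ω => Z ω * C.indicator (fun _ => (1:ℝ)) ω / (μ[Z|m]) ω) μ ∧
      ∫ ω, Z ω * C.indicator (fun _ => (1:ℝ)) ω / (μ[Z|m]) ω ∂μ = (μ C).toReal) ∧
    (Integrable (fun ω => (1 - Z ω) * C.indicator (fun _ => (1:ℝ)) ω / (1 - (μ[Z|m]) ω)) μ ∧
      ∫ ω, (1 - Z ω) * C.indicator (fun _ => (1:ℝ)) ω / (1 - (μ[Z|m]) ω) ∂μ = (μ C).toReal) := by
  have hA := key_ind hm hZmeas hZ01 (hπ.mono fun ω h => h.1) hC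
  have hπc : μ[(fun ω => 1 - Z ω)|m] =ᵐ[μ] fun ω => 1 - (μ[Z|m]) ω := by
    have h1 : μ[(fun _ => (1:ℝ)) - Z|m] =ᵐ[μ] μ[(fun _ => (1:ℝ))|m] - μ[Z|m] :=
      condExp_sub (integrable_const 1) hZint m
    have h2 : μ[(fun ω => 1 - Z ω)|m] =ᵐ[μ] μ[(fun _ => (1:ℝ))|m] - μ[Z|m] := h1
    filter_upwards [h2] with ω hω
    rw [hω, condExp_const hm]
    simp
  have hW'meas : Measurable[m0] (fun ω => 1 - Z ω) := measurable_const.sub hZmeas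
  have hW'01 : ∀ᵐ ω ∂μ, (1 - Z ω) = 0 ∨ (1 - Z ω) = 1 := by
    filter_upwards [hZ01] with ω hω; rcases hω with h'|h' <;> simp [h']
  have hp' : ∀ᵐ ω ∂μ, 0 < (μ[(fun ω => 1 - Z ω)|m]) ω := by
    filter_upwards [hπc, hπ] with ω h1 h2
    rw [h1]; linarith [h2.2]
  have hB := key_ind hm hW'meas hW'01 hp' hC
  have heq : (fun ω => (1 - Z ω) * C.indicator (fun _ => (1:ℝ)) ω / (μ[(fun ω => 1 - Z ω)|m]) ω)
      =ᵐ[μ] fun ω => (1 - Z ω) * C.indicator (fun _ => (1:ℝ)) ω / (1 - (μ[Z|m]) ω) := by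
    filter_upwards [hπc] with ω hω
    rw [hω]
  exact ⟨hA, hB.1.congr heq, by rw [← integral_congr_ae heq]; exact hB.2⟩


/-- Value of the set integral over a basic rectangle `Z⁻¹(S) ∩ C`. -/
lemma setint {m : MeasurableSpace Ω} (hm : m ≤ m0) [IsProbabilityMeasure μ]
    {Z : Ω → ℝ} (hZmeas : Measurable[m0] Z) (hZint : Integrable Z μ)
    (hZ01 : ∀ᵐ ω ∂μ, Z ω = 0 ∨ Z ω = 1)
    (hπ : ∀ᵐ ω ∂μ, 0 < (μ[Z|m]) ω ∧ (μ[Z|m]) ω < 1)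
    {S : Set ℝ} (hS : MeasurableSet S) {C : Set Ω} (hC : MeasurableSet[m] C) :
    ∫ x in Z ⁻¹' S ∩ C, (Z x / (μ[Z|m]) x - (1 - Z x) / (1 - (μ[Z|m]) x)) ∂μ
      = (if (1:ℝ) ∈ S then (μ C).toReal else 0)
        - (if (0:ℝ) ∈ S then (μ C).toReal else 0) := by
  classical
  obtain ⟨⟨I1, V1⟩, ⟨I2, V2⟩⟩ := pair hm hZmeas hZint hZ01 hπ hC
  set cS : ℝ := if (1:ℝ) ∈ S then 1 else 0 with hcS
  set dS : ℝ := if (0:ℝ) ∈ S then 1 else 0 with hdS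
  have hB : MeasurableSet[m0] (Z ⁻¹' S ∩ C) := (hZmeas hS).inter (hm _ hC)
  rw [@int_ind Ω m0 μ _ hB]
  have hae : (Z ⁻¹' S ∩ C).indicator
        (fun x => Z x / (μ[Z|m]) x - (1 - Z x) / (1 - (μ[Z|m]) x))
      =ᵐ[μ] fun ω => cS * (Z ω * C.indicator (fun _ => (1:ℝ)) ω / (μ[Z|m]) ω)
        - dS * ((1 - Z ω) * C.indicator (fun _ => (1:ℝ)) ω / (1 - (μ[Z|m]) ω)) := by
    filter_upwards [hZ01] with ω hZω
    simp only [Set.indicator_apply, Set.mem_inter_iff, Set.mem_preimage, hcS, hdS]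
    rcases hZω with h0|h0 <;> by_cases hωC : ω ∈ C <;>
      by_cases h1S : (1:ℝ) ∈ S <;> by_cases h0S : (0:ℝ) ∈ S <;>
      simp [h0, hωC, h1S, h0S]
  rw [integral_congr_ae hae, integral_sub (I1.const_mul cS) (I2.const_mul dS),
    integral_const_mul, integral_const_mul, V1, V2]
  by_cases h1S : (1:ℝ) ∈ S <;> by_cases h0S : (0:ℝ) ∈ S <;> simp [hcS, hdS, h1S, h0S]

end Late13

open MeasureTheory

/-- For the LATE weight, E[α(W)|W_s] = α_s(W_s): with Z Bernoulli, long propensity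
π = E[Z|σ(X,A)] and short propensity π_s = E[Z|σ(X)], both in (0,1) a.s.,
E[Z/π - (1-Z)/(1-π) | σ(Z,X)] = Z/π_s - (1-Z)/(1-π_s) a.s. -/
theorem stmt_13 {Ω : Type*} {m0 : MeasurableSpace Ω} (μ : Measure Ω) [IsProbabilityMeasure μ]
    (Z : Ω → ℝ) (hZmeas : Measurable Z) (hZ01 : ∀ᵐ ω ∂μ, Z ω = 0 ∨ Z ω = 1)
    {mX mXA : MeasurableSpace Ω} (hmX : mX ≤ mXA) (hmXA : mXA ≤ m0)
    (hπ : ∀ᵐ ω ∂μ, 0 < (μ[Z|mXA]) ω ∧ (μ[Z|mXA]) ω < 1)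
    (hπs : ∀ᵐ ω ∂μ, 0 < (μ[Z|mX]) ω ∧ (μ[Z|mX]) ω < 1)
    (mZX : MeasurableSpace Ω)
    (hmZX : mZX = MeasurableSpace.comap Z (borel ℝ) ⊔ mX) (hmZXle : mZX ≤ m0) :
    μ[(fun ω => Z ω / (μ[Z|mXA]) ω - (1 - Z ω) / (1 - (μ[Z|mXA]) ω)) | mZX] =ᵐ[μ]
      fun ω => Z ω / (μ[Z|mX]) ω - (1 - Z ω) / (1 - (μ[Z|mX]) ω) := by
  classical
  have hmX0 : mX ≤ m0 := hmX.trans hmXA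
  have hZint : Integrable Z μ := by
    refine (integrable_const (1:ℝ)).mono' hZmeas.aestronglyMeasurable ?_
    filter_upwards [hZ01] with ω hω; rcases hω with h'|h' <;> simp [h']
  -- global integrability and total integrals
  have hPair := Late13.pair hmXA hZmeas hZint hZ01 hπ (@MeasurableSet.univ Ω mXA)
  have hPairs := Late13.pair hmX0 hZmeas hZint hZ01 hπs (@MeasurableSet.univ Ω mX)
  simp only [Set.indicator_univ, mul_one, measure_univ, ENNReal.toReal_one] at hPair hPairs
  obtain ⟨⟨I1, V1⟩, ⟨I2, V2⟩⟩ := hPair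
  obtain ⟨⟨I3, V3⟩, ⟨I4, V4⟩⟩ := hPairs
  have hfint : Integrable (fun ω => Z ω / (μ[Z|mXA]) ω - (1 - Z ω) / (1 - (μ[Z|mXA]) ω)) μ :=
    I1.sub I2
  have hgint : Integrable (fun ω => Z ω / (μ[Z|mX]) ω - (1 - Z ω) / (1 - (μ[Z|mX]) ω)) μ :=
    I3.sub I4
  have huniv : ∫ x, (Z x / (μ[Z|mX]) x - (1 - Z x) / (1 - (μ[Z|mX]) x)) ∂μ
      = ∫ x, (Z x / (μ[Z|mXA]) x - (1 - Z x) / (1 - (μ[Z|mXA]) x)) ∂μ := by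
    rw [integral_sub I3 I4, integral_sub I1 I2, V1, V2, V3, V4]
  -- measurability of the candidate
  have hcomap_le : MeasurableSpace.comap Z (borel ℝ) ≤ mZX := hmZX ▸ le_sup_left
  have hmX_le : mX ≤ mZX := hmZX ▸ le_sup_right
  have hborel : Real.measurableSpace = borel ℝ := BorelSpace.measurable_eq
  have hZmZX : Measurable[mZX] Z := by
    intro t ht
    exact hcomap_le _ ⟨t, hborel ▸ ht, rfl⟩
  have hπsmZX : Measurable[mZX] (μ[Z|mX]) :=
    (stronglyMeasurable_condExp (m := mX)).measurable.mono hmX_le le_rfl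
  have hgsm : StronglyMeasurable[mZX]
      (fun ω => Z ω / (μ[Z|mX]) ω - (1 - Z ω) / (1 - (μ[Z|mX]) ω)) :=
    ((hZmZX.div hπsmZX).sub
      ((measurable_const.sub hZmZX).div (measurable_const.sub hπsmZX))).stronglyMeasurable
  -- the generating π-system
  set P : Set (Set Ω) := {B | ∃ S : Set ℝ, MeasurableSet[borel ℝ] S ∧
      ∃ C : Set Ω, MeasurableSet[mX] C ∧ B = Z ⁻¹' S ∩ C} with hPdef
  have hPgen : mZX = MeasurableSpace.generateFrom P := by
    rw [hmZX]
    apply le_antisymm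
    · refine sup_le ?_ ?_
      · intro B hB
        rw [MeasurableSpace.measurableSet_comap] at hB
        obtain ⟨S, hS, rfl⟩ := hB
        exact MeasurableSpace.measurableSet_generateFrom
          ⟨S, hS, Set.univ, MeasurableSet.univ, (Set.inter_univ _).symm⟩
      · intro C hC
        exact MeasurableSpace.measurableSet_generateFrom
          ⟨Set.univ, MeasurableSet.univ, C, hC, by simp⟩
    · refine MeasurableSpace.generateFrom_le ?_
      rintro B ⟨S, hS, C, hC, rfl⟩
      have h1 : MeasurableSet[MeasurableSpace.comap Z (borel ℝ) ⊔ mX] (Z ⁻¹' S) :=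
        (le_sup_left : MeasurableSpace.comap Z (borel ℝ) ≤ _) _ ⟨S, hS, rfl⟩
      have h2 : MeasurableSet[MeasurableSpace.comap Z (borel ℝ) ⊔ mX] C :=
        (le_sup_right : mX ≤ _) _ hC
      exact h1.inter h2
  have hPpi : IsPiSystem P := by
    rintro B1 ⟨S1, hS1, C1, hC1, rfl⟩ B2 ⟨S2, hS2, C2, hC2, rfl⟩ _
    refine ⟨S1 ∩ S2, hS1.inter hS2, C1 ∩ C2, hC1.inter hC2, ?_⟩
    rw [Set.preimage_inter]
    ext ω; simp only [Set.mem_inter_iff, Set.mem_preimage]; tauto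
  -- equality of set integrals on the π-system
  have hbasic : ∀ B ∈ P, ∫ x in B, (Z x / (μ[Z|mX]) x - (1 - Z x) / (1 - (μ[Z|mX]) x)) ∂μ
      = ∫ x in B, (Z x / (μ[Z|mXA]) x - (1 - Z x) / (1 - (μ[Z|mXA]) x)) ∂μ := by
    rintro B ⟨S, hS, C, hC, rfl⟩
    have hS' : MeasurableSet S := by rw [hborel]; exact hS
    rw [Late13.setint hmXA hZmeas hZint hZ01 hπ hS' (hmX _ hC),
      Late13.setint hmX0 hZmeas hZint hZ01 hπs hS' hC]
  -- extend to the whole σ-algebra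
  have hall : ∀ B, MeasurableSet[mZX] B →
      ∫ x in B, (Z x / (μ[Z|mX]) x - (1 - Z x) / (1 - (μ[Z|mX]) x)) ∂μ
      = ∫ x in B, (Z x / (μ[Z|mXA]) x - (1 - Z x) / (1 - (μ[Z|mXA]) x)) ∂μ := by
    intro B hB
    refine @MeasurableSpace.induction_on_inter Ω mZX
      (fun t _ => ∫ x in t, (Z x / (μ[Z|mX]) x - (1 - Z x) / (1 - (μ[Z|mX]) x)) ∂μ
        = ∫ x in t, (Z x / (μ[Z|mXA]) x - (1 - Z x) / (1 - (μ[Z|mXA]) x)) ∂μ)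
      P hPgen hPpi (by simp) hbasic ?_ ?_ B hB
    · intro t htm heq
      have ht0 : MeasurableSet[m0] t := hmZXle _ htm
      rw [@Late13.int_compl Ω m0 μ t ht0 _ hgint, @Late13.int_compl Ω m0 μ t ht0 _ hfint,
        heq, huniv]
    · intro s hd hm' heq
      rw [@Late13.int_iUnion Ω m0 μ s (fun i => hmZXle _ (hm' i)) hd _ hgint,
        @Late13.int_iUnion Ω m0 μ s (fun i => hmZXle _ (hm' i)) hd _ hfint]
      exact tsum_congr heq
  -- conclude by uniqueness of conditional expectation
  haveI : SigmaFinite (μ.trim hmZXle) := inferInstance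
  refine (ae_eq_condExp_of_forall_setIntegral_eq (μ := μ) (m := mZX) hmZXle hfint
    ?_ ?_ ?_).symm
  · exact fun s _ _ => hgint.restrict
  · exact fun s hs _ => hall s hs
  · exact hgsm.aestronglyMeasurable
end

section
/- For the LATT weight, E[α(W)|W_s] = α_s(W_s): with Z Bernoulli, π(X,A) = E[Z|X,A] ∈ (0,1), π_s(X) = E[Z|X] ∈ (0,1), one has E[Z - (1-Z)·π(X,A)/(1-π(X,A)) | Z, X] = Z - (1-Z)·π_s(X)/(1-π_s(X)) a.s. -/
open MeasureTheory

private lemma aux_Zint {Ω : Type*} {m0 : MeasurableSpace Ω} (μ : Measure Ω)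
    [IsProbabilityMeasure μ] {Z : Ω → ℝ} (hZmeas : Measurable Z)
    (hZ01 : ∀ᵐ ω ∂μ, Z ω = 0 ∨ Z ω = 1) : Integrable Z μ := by
  refine Integrable.mono' (integrable_const (1 : ℝ)) hZmeas.aestronglyMeasurable ?_
  filter_upwards [hZ01] with ω hω
  rcases hω with h | h <;> simp [h]

/-- Key lemma: for a sub-σ-algebra `m` with `p = μ[Z|m] ∈ (0,1)` a.e.,
the function `(1-Z) * p/(1-p)` is integrable and integrates to `∫ Z` on every
`m`-measurable set. -/
private lemma aux_key {Ω : Type*} {m0 : MeasurableSpace Ω} (μ : Measure Ω)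
    [IsProbabilityMeasure μ] {Z : Ω → ℝ} (hZmeas : Measurable Z)
    (hZ01 : ∀ᵐ ω ∂μ, Z ω = 0 ∨ Z ω = 1) {m : MeasurableSpace Ω} (hm : m ≤ m0)
    (hp : ∀ᵐ ω ∂μ, 0 < (μ[Z|m]) ω ∧ (μ[Z|m]) ω < 1) :
    Integrable (fun ω => (1 - Z ω) * ((μ[Z|m]) ω / (1 - (μ[Z|m]) ω))) μ ∧
    ∀ T : Set Ω, MeasurableSet[m] T →
      ∫ ω in T, (1 - Z ω) * ((μ[Z|m]) ω / (1 - (μ[Z|m]) ω)) ∂μ = ∫ ω in T, Z ω ∂μ := by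
  set p : Ω → ℝ := μ[Z|m] with hpdef
  set f : Ω → ℝ := fun ω => p ω / (1 - p ω) with hfdef
  have hZint : Integrable Z μ := aux_Zint μ hZmeas hZ01
  have hpsm : StronglyMeasurable[m] p := stronglyMeasurable_condExp
  have hpm : Measurable[m] p := hpsm.measurable
  have hfm : Measurable[m] f := hpm.div (measurable_const.sub hpm)
  have hfsm : StronglyMeasurable[m] f := hfm.stronglyMeasurable
  have hfmeas : Measurable[m0] f := hfm.mono hm le_rfl
  have h1Zint : Integrable (fun ω => 1 - Z ω) μ := (integrable_const (1 : ℝ)).sub hZint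
  -- conditional expectation of 1 - Z
  have h1Zc : μ[(fun ω => 1 - Z ω)|m] =ᵐ[μ] fun ω => 1 - p ω := by
    have h := condExp_sub (μ := μ) (m := m) (f := fun _ => (1 : ℝ)) (g := Z)
      (integrable_const 1) hZint
    have hc : μ[(fun _ => (1 : ℝ))|m] = fun _ => (1 : ℝ) := condExp_const hm 1
    filter_upwards [h] with ω hω
    have : ((fun _ => (1:ℝ)) - Z) = fun ω => 1 - Z ω := rfl
    rw [this] at hω
    rw [hω, Pi.sub_apply, hc]
  -- truncations
  set q : ℕ → Ω → ℝ := fun n ω => (1 - Z ω) * min (f ω) n with hqdef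
  have hqmeas : ∀ n, Measurable[m0] (q n) := fun n =>
    ((measurable_const.sub hZmeas).mul (hfmeas.min measurable_const))
  have hgood : ∀ᵐ ω ∂μ, (Z ω = 0 ∨ Z ω = 1) ∧ 0 < p ω ∧ p ω < 1 := hZ01.and hp
  have hf_pos : ∀ᵐ ω ∂μ, 0 < f ω := by
    filter_upwards [hp] with ω hω
    exact div_pos hω.1 (by linarith [hω.2])
  have hqint : ∀ n, Integrable (q n) μ := by
    intro n
    refine Integrable.mono' (integrable_const (n : ℝ)) (hqmeas n).aestronglyMeasurable ?_
    filter_upwards [hgood] with ω hω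
    have hf0 : 0 < f ω := div_pos hω.2.1 (by linarith [hω.2.2])
    have h1 : |1 - Z ω| ≤ 1 := by rcases hω.1 with h | h <;> simp [h]
    have h2 : |min (f ω) n| ≤ (n : ℝ) := by
      rw [abs_of_nonneg (le_min hf0.le (Nat.cast_nonneg n))]
      exact min_le_right _ _
    calc ‖q n ω‖ = |1 - Z ω| * |min (f ω) n| := by rw [hqdef]; simp [abs_mul]
      _ ≤ 1 * (n : ℝ) := mul_le_mul h1 h2 (abs_nonneg _) zero_le_one
      _ = (n : ℝ) := one_mul _
  have hq_nonneg : ∀ n, 0 ≤ᵐ[μ] q n := by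
    intro n
    filter_upwards [hgood] with ω hω
    have hf0 : 0 < f ω := div_pos hω.2.1 (by linarith [hω.2.2])
    have h1 : (0:ℝ) ≤ 1 - Z ω := by rcases hω.1 with h | h <;> simp [h]
    exact mul_nonneg h1 (le_min hf0.le (Nat.cast_nonneg n))
  -- conditional expectation of the truncation
  have hqcond : ∀ n, μ[q n|m] =ᵐ[μ] fun ω => min (f ω) n * (1 - p ω) := by
    intro n
    have hmin_sm : StronglyMeasurable[m] fun ω => min (f ω) (n:ℝ) :=
      (hfm.min measurable_const).stronglyMeasurable
    have hqeq : q n = (fun ω => min (f ω) (n:ℝ)) * fun ω => 1 - Z ω := by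
      funext ω; simp [hqdef, mul_comm]
    have h := condExp_mul_of_stronglyMeasurable_left (μ := μ) hmin_sm
      (by rw [← hqeq]; exact hqint n) h1Zint
    rw [← hqeq] at h
    filter_upwards [h, h1Zc] with ω hω h1ω
    rw [hω, Pi.mul_apply, h1ω]
  -- bound on the integrals of truncations
  have hq_bound : ∀ n, ∫ ω, q n ω ∂μ ≤ 1 := by
    intro n
    rw [← integral_condExp hm (f := q n)]
    have hle : (μ[q n|m]) ≤ᵐ[μ] fun _ => (1:ℝ) := by
      filter_upwards [hqcond n, hgood] with ω hω h2
      rw [hω]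
      have hf0 : 0 < f ω := div_pos h2.2.1 (by linarith [h2.2.2])
      have h1p : 0 < 1 - p ω := by linarith [h2.2.2]
      calc min (f ω) n * (1 - p ω) ≤ f ω * (1 - p ω) :=
            mul_le_mul_of_nonneg_right (min_le_left _ _) h1p.le
        _ = p ω := div_mul_cancel₀ _ (ne_of_gt h1p)
        _ ≤ 1 := h2.2.2.le
    calc ∫ ω, (μ[q n|m]) ω ∂μ ≤ ∫ _ω, (1:ℝ) ∂μ :=
          integral_mono_ae integrable_condExp (integrable_const 1) hle
      _ = 1 := by simp
  -- the limit function
  set g : Ω → ℝ := fun ω => (1 - Z ω) * f ω with hgdef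
  have hgmeas : Measurable[m0] g := (measurable_const.sub hZmeas).mul hfmeas
  have hg_nonneg : 0 ≤ᵐ[μ] g := by
    filter_upwards [hgood] with ω hω
    have hf0 : 0 < f ω := div_pos hω.2.1 (by linarith [hω.2.2])
    have h1 : (0:ℝ) ≤ 1 - Z ω := by rcases hω.1 with h | h <;> simp [h]
    exact mul_nonneg h1 hf0.le
  -- monotone convergence set-up
  have hkey : ∀ᵐ ω ∂μ, (Monotone fun n => ENNReal.ofReal (q n ω)) ∧
      (⨆ n, ENNReal.ofReal (q n ω)) = ENNReal.ofReal (g ω) := by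
    filter_upwards [hgood] with ω hω
    have hf0 : 0 < f ω := div_pos hω.2.1 (by linarith [hω.2.2])
    have h1 : (0:ℝ) ≤ 1 - Z ω := by rcases hω.1 with h | h <;> simp [h]
    have hmono : Monotone fun n : ℕ => q n ω := by
      intro a b hab
      exact mul_le_mul_of_nonneg_left (min_le_min le_rfl (Nat.cast_le.2 hab)) h1
    constructor
    · exact fun a b hab => ENNReal.ofReal_le_ofReal (hmono hab)
    · refine le_antisymm (iSup_le fun n => ENNReal.ofReal_le_ofReal ?_) ?_
      · exact mul_le_mul_of_nonneg_left (min_le_left _ _) h1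
      · have : q ⌈f ω⌉₊ ω = g ω := by
          rw [hqdef, hgdef]
          simp only []
          rw [min_eq_left (Nat.le_ceil _)]
        exact le_iSup_of_le ⌈f ω⌉₊ (le_of_eq (by rw [this]))
  have hlint : ∫⁻ ω, ENNReal.ofReal (g ω) ∂μ ≤ 1 := by
    have h1 : ∫⁻ ω, ENNReal.ofReal (g ω) ∂μ = ∫⁻ ω, ⨆ n, ENNReal.ofReal (q n ω) ∂μ := by
      refine lintegral_congr_ae ?_
      filter_upwards [hkey] with ω hω using hω.2.symm
    rw [h1, lintegral_iSup' (fun n => ((hqmeas n).ennreal_ofReal).aemeasurable)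
      (by filter_upwards [hkey] with ω hω using hω.1)]
    refine iSup_le fun n => ?_
    rw [← ofReal_integral_eq_lintegral_ofReal (hqint n) (hq_nonneg n)]
    calc ENNReal.ofReal (∫ ω, q n ω ∂μ) ≤ ENNReal.ofReal 1 :=
          ENNReal.ofReal_le_ofReal (hq_bound n)
      _ = 1 := ENNReal.ofReal_one
  have hgint : Integrable g μ := by
    refine ⟨hgmeas.aestronglyMeasurable, ?_⟩
    rw [hasFiniteIntegral_iff_ofReal hg_nonneg]
    exact lt_of_le_of_lt hlint ENNReal.one_lt_top
  -- conditional expectation of g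
  have hgcond : μ[g|m] =ᵐ[μ] p := by
    have hgeq : g = f * fun ω => 1 - Z ω := by funext ω; simp [hgdef, mul_comm]
    have h := condExp_mul_of_stronglyMeasurable_left (μ := μ) hfsm (by rw [← hgeq]; exact hgint) h1Zint
    rw [← hgeq] at h
    filter_upwards [h, h1Zc, hp] with ω hω h1ω h2
    rw [hω, Pi.mul_apply, h1ω]
    have h1p : 0 < 1 - p ω := by linarith [h2.2]
    exact div_mul_cancel₀ _ (ne_of_gt h1p)
  refine ⟨hgint, fun T hT => ?_⟩
  calc ∫ ω in T, g ω ∂μ = ∫ ω in T, (μ[g|m]) ω ∂μ := (setIntegral_condExp hm hgint hT).symm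
    _ = ∫ ω in T, p ω ∂μ := integral_congr_ae (ae_restrict_of_ae hgcond)
    _ = ∫ ω in T, Z ω ∂μ := setIntegral_condExp hm hZint hT


private lemma aux_integrableOn {Ω : Type*} {m0 : MeasurableSpace Ω} {μ : Measure Ω}
    {f : Ω → ℝ} (h : Integrable f μ) (s : Set Ω) : IntegrableOn f s μ :=
  h.restrict

open Classical in
private lemma aux_basic {Ω : Type*} {m0 : MeasurableSpace Ω} (μ : Measure Ω)
    [IsProbabilityMeasure μ] {Z u : Ω → ℝ} (hZmeas : Measurable Z)
    (hZ01 : ∀ᵐ ω ∂μ, Z ω = 0 ∨ Z ω = 1) (hZint : Integrable Z μ)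
    (hu : Integrable (fun ω => (1 - Z ω) * u ω) μ)
    {B : Set ℝ} (hB : MeasurableSet B) (T : Set Ω) :
    ∫ ω in Z ⁻¹' B ∩ T, (Z ω - (1 - Z ω) * u ω) ∂μ =
      (if (1:ℝ) ∈ B then (1:ℝ) else 0) * ∫ ω in T, Z ω ∂μ -
        (if (0:ℝ) ∈ B then (1:ℝ) else 0) * ∫ ω in T, (1 - Z ω) * u ω ∂μ := by
  classical
  have hZB : MeasurableSet (Z ⁻¹' B) := hZmeas hB
  set c1 : ℝ := if (1:ℝ) ∈ B then 1 else 0 with hc1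
  set c0 : ℝ := if (0:ℝ) ∈ B then 1 else 0 with hc0
  have hae : ∀ᵐ ω ∂μ,
      (Z ⁻¹' B).indicator (fun ω => Z ω - (1 - Z ω) * u ω) ω =
        c1 * Z ω - c0 * ((1 - Z ω) * u ω) := by
    filter_upwards [hZ01] with ω hω
    rcases hω with h0 | h1
    · by_cases hB0 : (0:ℝ) ∈ B
      · have hmem : ω ∈ Z ⁻¹' B := by simp [Set.mem_preimage, h0, hB0]
        simp [Set.indicator_of_mem hmem, h0, hc0, hc1, hB0]
      · have hmem : ω ∉ Z ⁻¹' B := by simp [Set.mem_preimage, h0, hB0]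
        simp [Set.indicator_of_notMem hmem, h0, hc0, hB0]
    · by_cases hB1 : (1:ℝ) ∈ B
      · have hmem : ω ∈ Z ⁻¹' B := by simp [Set.mem_preimage, h1, hB1]
        simp [Set.indicator_of_mem hmem, h1, hc1, hB1]
      · have hmem : ω ∉ Z ⁻¹' B := by simp [Set.mem_preimage, h1, hc1, hB1]
        simp [Set.indicator_of_notMem hmem, h1, hc1, hB1]
  rw [Set.inter_comm, ← setIntegral_indicator hZB]
  calc ∫ ω in T, (Z ⁻¹' B).indicator (fun ω => Z ω - (1 - Z ω) * u ω) ω ∂μ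
      = ∫ ω in T, (c1 * Z ω - c0 * ((1 - Z ω) * u ω)) ∂μ :=
        integral_congr_ae (ae_restrict_of_ae hae)
    _ = c1 * ∫ ω in T, Z ω ∂μ - c0 * ∫ ω in T, (1 - Z ω) * u ω ∂μ := by
        rw [integral_sub ((hZint.const_mul c1).integrableOn)
          ((hu.const_mul c0).integrableOn), integral_const_mul, integral_const_mul]

private lemma aux_compl {Ω : Type*} {m0 : MeasurableSpace Ω} (μ : Measure Ω)
    [IsProbabilityMeasure μ] {v w : Ω → ℝ} (hv : Integrable v μ) (hw : Integrable w μ)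
    (huniv : ∫ ω, v ω ∂μ = ∫ ω, w ω ∂μ) {t : Set Ω} (ht : MeasurableSet t)
    (hone : ∫ ω in t, v ω ∂μ = ∫ ω in t, w ω ∂μ) :
    ∫ ω in tᶜ, v ω ∂μ = ∫ ω in tᶜ, w ω ∂μ := by
  have h1 := integral_add_compl ht hv
  have h2 := integral_add_compl ht hw
  linarith

private lemma aux_iUnion {Ω : Type*} {m0 : MeasurableSpace Ω} (μ : Measure Ω)
    [IsProbabilityMeasure μ] {v w : Ω → ℝ} (hv : Integrable v μ) (hw : Integrable w μ)
    {s : ℕ → Set Ω} (hd : Pairwise (Function.onFun Disjoint s))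
    (hm : ∀ i, MeasurableSet (s i))
    (h : ∀ i, ∫ ω in s i, v ω ∂μ = ∫ ω in s i, w ω ∂μ) :
    ∫ ω in ⋃ i, s i, v ω ∂μ = ∫ ω in ⋃ i, s i, w ω ∂μ := by
  rw [integral_iUnion hm hd hv.integrableOn, integral_iUnion hm hd hw.integrableOn]
  exact tsum_congr h

/-- For the LATT weight, E[α(W)|W_s] = α_s(W_s):
E[Z - (1-Z)π/(1-π) | σ(Z,X)] = Z - (1-Z)π_s/(1-π_s) a.s. -/
theorem stmt_14 {Ω : Type*} {m0 : MeasurableSpace Ω} (μ : Measure Ω) [IsProbabilityMeasure μ]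
    (Z : Ω → ℝ) (hZmeas : Measurable Z) (hZ01 : ∀ᵐ ω ∂μ, Z ω = 0 ∨ Z ω = 1)
    {mX mXA : MeasurableSpace Ω} (hmX : mX ≤ mXA) (hmXA : mXA ≤ m0)
    (hπ : ∀ᵐ ω ∂μ, 0 < (μ[Z|mXA]) ω ∧ (μ[Z|mXA]) ω < 1)
    (hπs : ∀ᵐ ω ∂μ, 0 < (μ[Z|mX]) ω ∧ (μ[Z|mX]) ω < 1)
    (mZX : MeasurableSpace Ω)
    (hmZX : mZX = MeasurableSpace.comap Z (borel ℝ) ⊔ mX) (hmZXle : mZX ≤ m0) :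
    μ[(fun ω => Z ω - (1 - Z ω) * (μ[Z|mXA]) ω / (1 - (μ[Z|mXA]) ω)) | mZX] =ᵐ[μ]
      fun ω => Z ω - (1 - Z ω) * (μ[Z|mX]) ω / (1 - (μ[Z|mX]) ω) := by
  classical
  have hmXle : mX ≤ m0 := hmX.trans hmXA
  set π : Ω → ℝ := μ[Z|mXA] with hπdef
  set πs : Ω → ℝ := μ[Z|mX] with hπsdef
  obtain ⟨hgint, hgT⟩ := aux_key μ hZmeas hZ01 hmXA hπ
  obtain ⟨hhint, hhT⟩ := aux_key μ hZmeas hZ01 hmXle hπs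
  have hZint : Integrable Z μ := aux_Zint μ hZmeas hZ01
  set g : Ω → ℝ := fun ω => (1 - Z ω) * (π ω / (1 - π ω)) with hgdef
  set h : Ω → ℝ := fun ω => (1 - Z ω) * (πs ω / (1 - πs ω)) with hhdef
  set α : Ω → ℝ := fun ω => Z ω - (1 - Z ω) * π ω / (1 - π ω) with hαdef
  set αs : Ω → ℝ := fun ω => Z ω - (1 - Z ω) * πs ω / (1 - πs ω) with hαsdef
  have hαeq : α = fun ω => Z ω - g ω := by
    funext ω; rw [hαdef, hgdef]; simp only []; rw [mul_div_assoc]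
  have hαseq : αs = fun ω => Z ω - h ω := by
    funext ω; rw [hαsdef, hhdef]; simp only []; rw [mul_div_assoc]
  have hαint : Integrable α μ := by rw [hαeq]; exact hZint.sub hgint
  have hαsint : Integrable αs μ := by rw [hαseq]; exact hZint.sub hhint
  -- measurability of αs with respect to mZX
  have hRborel : (Real.measurableSpace : MeasurableSpace ℝ) = borel ℝ := BorelSpace.measurable_eq
  have hZmZX : Measurable[mZX] Z := by
    refine Measurable.of_comap_le ?_
    rw [hRborel, hmZX]
    exact le_sup_left
  have hπs_mZX : Measurable[mZX] πs := by
    have h1 : Measurable[mX] πs := (stronglyMeasurable_condExp (f := Z)).measurable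
    exact h1.mono (by rw [hmZX]; exact le_sup_right) le_rfl
  have hαs_sm : StronglyMeasurable[mZX] αs := by
    have : Measurable[mZX] αs := by
      rw [hαsdef]
      exact hZmZX.sub (((measurable_const.sub hZmZX).mul hπs_mZX).div
        (measurable_const.sub hπs_mZX))
    exact this.stronglyMeasurable
  haveI : SigmaFinite (μ.trim hmZXle) := by
    haveI : IsFiniteMeasure (μ.trim hmZXle) := isFiniteMeasure_trim hmZXle
    infer_instance
  -- set-integral equality on a π-system generating mZX
  set C : Set (Set Ω) := {S | ∃ B T, MeasurableSet[borel ℝ] B ∧ MeasurableSet[mX] T ∧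
    S = Z ⁻¹' B ∩ T} with hCdef
  have hgen : mZX = MeasurableSpace.generateFrom C := by
    refine le_antisymm ?_ ?_
    · rw [hmZX]
      refine sup_le ?_ ?_
      · intro s hs
        obtain ⟨B, hB, rfl⟩ := MeasurableSpace.measurableSet_comap.1 hs
        refine MeasurableSpace.measurableSet_generateFrom ?_
        exact ⟨B, Set.univ, hB, MeasurableSet.univ, by simp⟩
      · intro T hT
        refine MeasurableSpace.measurableSet_generateFrom ?_
        exact ⟨Set.univ, T, MeasurableSet.univ, hT, by simp⟩
    · refine MeasurableSpace.generateFrom_le ?_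
      rintro S ⟨B, T, hB, hT, rfl⟩
      rw [hmZX]
      exact MeasurableSet.inter (le_sup_left (a := MeasurableSpace.comap Z (borel ℝ))
        (b := mX) _ ⟨B, hB, rfl⟩) (le_sup_right (a := MeasurableSpace.comap Z (borel ℝ))
        (b := mX) _ hT)
  have hpi : IsPiSystem C := by
    rintro s ⟨B₁, T₁, hB₁, hT₁, rfl⟩ t ⟨B₂, T₂, hB₂, hT₂, rfl⟩ -
    refine ⟨B₁ ∩ B₂, T₁ ∩ T₂, hB₁.inter hB₂, hT₁.inter hT₂, ?_⟩
    ext ω; simp only [Set.mem_inter_iff, Set.mem_preimage]; tauto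
  -- integrals over mX-measurable sets
  have hTkey : ∀ T : Set Ω, MeasurableSet[mX] T →
      (∫ ω in T, g ω ∂μ = ∫ ω in T, Z ω ∂μ) ∧ ∫ ω in T, h ω ∂μ = ∫ ω in T, Z ω ∂μ :=
    fun T hT => ⟨hgT T (hmX T hT), hhT T hT⟩
  -- whole-space integrals
  have huniv : ∫ ω, αs ω ∂μ = ∫ ω, α ω ∂μ := by
    have h1 : ∫ ω, α ω ∂μ = ∫ ω, Z ω ∂μ - ∫ ω, g ω ∂μ := by
      rw [hαeq]; exact integral_sub hZint hgint
    have h2 : ∫ ω, αs ω ∂μ = ∫ ω, Z ω ∂μ - ∫ ω, h ω ∂μ := by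
      rw [hαseq]; exact integral_sub hZint hhint
    have h3 := (hTkey Set.univ MeasurableSet.univ)
    rw [Measure.restrict_univ] at h3
    rw [h1, h2, h3.1, h3.2]
  -- the key predicate
  have hP : ∀ ⦃S : Set Ω⦄, MeasurableSet[mZX] S →
      ∫ ω in S, αs ω ∂μ = ∫ ω in S, α ω ∂μ := by
    refine MeasurableSpace.induction_on_inter (m := mZX)
      (C := fun S _ => ∫ ω in S, αs ω ∂μ = ∫ ω in S, α ω ∂μ) hgen hpi (by simp) ?_ ?_ ?_
    · -- basic sets
      rintro S ⟨B, T, hB, hT, rfl⟩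
      have hBm : MeasurableSet[Real.measurableSpace] B := by rw [hRborel]; exact hB
      have e1 : ∫ ω in Z ⁻¹' B ∩ T, α ω ∂μ =
          (if (1:ℝ) ∈ B then (1:ℝ) else 0) * ∫ ω in T, Z ω ∂μ -
            (if (0:ℝ) ∈ B then (1:ℝ) else 0) * ∫ ω in T, g ω ∂μ := by
        rw [hαeq]
        exact aux_basic μ hZmeas hZ01 hZint (by rw [← hgdef]; exact hgint) hBm T
      have e2 : ∫ ω in Z ⁻¹' B ∩ T, αs ω ∂μ =
          (if (1:ℝ) ∈ B then (1:ℝ) else 0) * ∫ ω in T, Z ω ∂μ -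
            (if (0:ℝ) ∈ B then (1:ℝ) else 0) * ∫ ω in T, h ω ∂μ := by
        rw [hαseq]
        exact aux_basic μ hZmeas hZ01 hZint (by rw [← hhdef]; exact hhint) hBm T
      rw [e1, e2, (hTkey T hT).1, (hTkey T hT).2]
    · -- complements
      intro t htm ht
      exact aux_compl μ hαsint hαint huniv (hmZXle t htm) ht
    · -- disjoint unions
      intro s hd hsm hs
      exact aux_iUnion μ hαsint hαint hd (fun i => hmZXle _ (hsm i)) hs
  have hfinal := ae_eq_condExp_of_forall_setIntegral_eq (μ := μ) hmZXle hαint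
    (fun s _ _ => aux_integrableOn hαsint s) (fun s hs _ => hP hs)
    (StronglyMeasurable.aestronglyMeasurable hαs_sm)
  exact hfinal.symm
end
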